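/- arXiv:1704.00937 — 2 statements merged into one kernel-verified Lean document; each statement's English description precedes it below -/
import Mathlib

section
/- Let D be a strongly connected digraph with at least 2 vertices. Then ⟨D⟩ contains every constant transformation of the vertex set, i.e. for every vertex t the map sending every vertex to t belongs to ⟨D⟩. -/
/-- The transformation of `{1,…,n}` sending `a` to `b` and fixing all other points. -/
def arcT {n : ℕ} (a b : Fin n) : Fin n → Fin n := fun v => if v = a then b else v

/-- The semigroup `⟨D⟩` generated by the arcs of the digraph `D`; transformations act on
the right, so a product `ε₁ε₂⋯ε_k` is the function `ε_k ∘ ⋯ ∘ ε₁`. -/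
def genSg {n : ℕ} (D : Set (Fin n × Fin n)) : Set (Fin n → Fin n) :=
  { α | ∃ l : List (Fin n × Fin n), l ≠ [] ∧ (∀ p ∈ l, p ∈ D) ∧
      α = l.foldl (fun f p => arcT p.1 p.2 ∘ f) id }

/-- The product `x·y` in the right-action convention: apply `x` first, then `y`. -/
def sgMul {n : ℕ} (x y : Fin n → Fin n) : Fin n → Fin n := y ∘ x

/-- The right ideal `xS¹ = {x} ∪ xS`. -/
def rIdeal {n : ℕ} (S : Set (Fin n → Fin n)) (x : Fin n → Fin n) : Set (Fin n → Fin n) :=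
  insert x { y | ∃ s ∈ S, y = sgMul x s }

/-- The left ideal `S¹x = {x} ∪ Sx`. -/
def lIdeal {n : ℕ} (S : Set (Fin n → Fin n)) (x : Fin n → Fin n) : Set (Fin n → Fin n) :=
  insert x { y | ∃ s ∈ S, y = sgMul s x }

/-- The two-sided ideal `S¹xS¹`. -/
def jIdeal {n : ℕ} (S : Set (Fin n → Fin n)) (x : Fin n → Fin n) : Set (Fin n → Fin n) :=
  { y | ∃ s ∈ insert id S, ∃ t ∈ insert id S, y = sgMul s (sgMul x t) }

def RRel {n : ℕ} (S : Set (Fin n → Fin n)) (x y : Fin n → Fin n) : Prop :=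
  rIdeal S x = rIdeal S y

def LRel {n : ℕ} (S : Set (Fin n → Fin n)) (x y : Fin n → Fin n) : Prop :=
  lIdeal S x = lIdeal S y

def JRel {n : ℕ} (S : Set (Fin n → Fin n)) (x y : Fin n → Fin n) : Prop :=
  jIdeal S x = jIdeal S y

def RTrivial {n : ℕ} (S : Set (Fin n → Fin n)) : Prop :=
  ∀ x ∈ S, ∀ y ∈ S, RRel S x y → x = y

def LTrivial {n : ℕ} (S : Set (Fin n → Fin n)) : Prop :=
  ∀ x ∈ S, ∀ y ∈ S, LRel S x y → x = y

def HTrivial {n : ℕ} (S : Set (Fin n → Fin n)) : Prop :=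
  ∀ x ∈ S, ∀ y ∈ S, RRel S x y → LRel S x y → x = y

def JTrivial {n : ℕ} (S : Set (Fin n → Fin n)) : Prop :=
  ∀ x ∈ S, ∀ y ∈ S, JRel S x y → x = y

/-- `α` has a cycle of length `k`: `k` distinct points `a₀,…,a_{k-1}` with
`α(aᵢ) = a_{i+1 mod k}`. -/
def IsCycleOf {n : ℕ} (α : Fin n → Fin n) (k : ℕ) : Prop :=
  0 < k ∧ ∃ a : ZMod k → Fin n, Function.Injective a ∧ ∀ i, α (a i) = a (i + 1)

/-- `l(D)`: the maximal length of a cycle of an element of `⟨D⟩`. -/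
noncomputable def lD {n : ℕ} (D : Set (Fin n × Fin n)) : ℕ :=
  sSup { k | ∃ α ∈ genSg D, IsCycleOf α k }

/-- The arc set of a graph. -/
def arcsOf {n : ℕ} (G : SimpleGraph (Fin n)) : Set (Fin n × Fin n) :=
  { p | G.Adj p.1 p.2 }

/-- `l(G)` for a graph `G`. -/
noncomputable def lG {n : ℕ} (G : SimpleGraph (Fin n)) : ℕ := lD (arcsOf G)

/-- Reachability along directed walks of `D`. -/
def dreach {n : ℕ} (D : Set (Fin n × Fin n)) : Fin n → Fin n → Prop :=
  Relation.ReflTransGen (fun a b => (a, b) ∈ D)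

/-- The strong component of the vertex `v`. -/
def strongComp {n : ℕ} (D : Set (Fin n × Fin n)) (v : Fin n) : Set (Fin n) :=
  { u | dreach D u v ∧ dreach D v u }

/-- The underlying graph of the digraph `D`. -/
def underlying {n : ℕ} (D : Set (Fin n × Fin n)) : SimpleGraph (Fin n) where
  Adj a b := a ≠ b ∧ ((a, b) ∈ D ∨ (b, a) ∈ D)
  symm := ⟨fun a b h => ⟨h.1.symm, h.2.symm⟩⟩
  loopless := ⟨fun a h => h.1 rfl⟩

/-- `v 0, v 1, …, v r` is a cycle of the digraph `D`. -/
def IsDCycle {n : ℕ} (D : Set (Fin n × Fin n)) (r : ℕ) (v : ℕ → Fin n) : Prop :=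
  1 ≤ r ∧ v r = v 0 ∧ (∀ i < r, ∀ j < r, v i = v j → i = j) ∧
    ∀ i < r, (v i, v (i + 1)) ∈ D

def HasDCycle {n : ℕ} (D : Set (Fin n × Fin n)) : Prop := ∃ r v, IsDCycle D r v

def DAcyclic {n : ℕ} (D : Set (Fin n × Fin n)) : Prop := ¬ HasDCycle D

/-- `G` is a subgroup contained in the transformation semigroup `S`. -/
def IsSubgroupIn {n : ℕ} (S G : Set (Fin n → Fin n)) : Prop :=
  G ⊆ S ∧ (∀ x ∈ G, ∀ y ∈ G, sgMul x y ∈ G) ∧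
    ∃ e ∈ G, (∀ x ∈ G, sgMul e x = x ∧ sgMul x e = x) ∧
      ∀ x ∈ G, ∃ y ∈ G, sgMul x y = e ∧ sgMul y x = e

/-- Every subgroup of `S` is trivial. -/
def SgAperiodic {n : ℕ} (S : Set (Fin n → Fin n)) : Prop :=
  ∀ G, IsSubgroupIn S G → G.Subsingleton

lemma foldl_comp_aux {n : ℕ} (l : List (Fin n × Fin n)) :
    ∀ g : Fin n → Fin n,
      l.foldl (fun f p => arcT p.1 p.2 ∘ f) g =
        (l.foldl (fun f p => arcT p.1 p.2 ∘ f) id) ∘ g := by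
  induction l with
  | nil => intro g; rfl
  | cons p l ih =>
      intro g
      simp only [List.foldl_cons]
      rw [ih (arcT p.1 p.2 ∘ g), ih (arcT p.1 p.2 ∘ id)]
      rfl

lemma genSg_mul {n : ℕ} {D : Set (Fin n × Fin n)} {f g : Fin n → Fin n}
    (hf : f ∈ genSg D) (hg : g ∈ genSg D) : g ∘ f ∈ genSg D := by
  obtain ⟨l, hl, hlD, hlf⟩ := hf
  obtain ⟨l', hl', hl'D, hl'g⟩ := hg
  refine ⟨l ++ l', by simp [hl], ?_, ?_⟩
  · intro p hp; rcases List.mem_append.1 hp with h | h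
    · exact hlD p h
    · exact hl'D p h
  · rw [List.foldl_append, ← hlf, foldl_comp_aux, ← hl'g]

lemma arcT_mem {n : ℕ} {D : Set (Fin n × Fin n)} {a b : Fin n} (h : (a, b) ∈ D) :
    arcT a b ∈ genSg D := by
  refine ⟨[(a, b)], by simp, by simp [h], ?_⟩
  funext v; rfl

/-- Collapse along a directed walk: there is an element of `⟨D⟩` (or the identity)
sending `x` to `y` and moving every other point either nowhere or to `y`. -/
lemma walk_collapse {n : ℕ} {D : Set (Fin n × Fin n)} {x y : Fin n}
    (h : dreach D x y) :
    ∃ g : Fin n → Fin n, (g = id ∨ g ∈ genSg D) ∧ g x = y ∧ ∀ z, g z = z ∨ g z = y := by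
  induction h using Relation.ReflTransGen.head_induction_on with
  | refl => exact ⟨id, Or.inl rfl, rfl, fun z => Or.inl rfl⟩
  | head hac _ ih =>
      rename_i a c _
      obtain ⟨g', hg', hg'c, hg'z⟩ := ih
      refine ⟨g' ∘ arcT a c, ?_, ?_, ?_⟩
      · rcases hg' with rfl | hg'
        · exact Or.inr (by simpa using arcT_mem hac)
        · exact Or.inr (genSg_mul (arcT_mem hac) hg')
      · simp only [Function.comp_apply, arcT, if_pos rfl]; exact hg'c
      · intro z
        by_cases hz : z = a
        · subst hz
          right
          simp only [Function.comp_apply, arcT, if_pos rfl]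
          exact hg'c
        · simp only [Function.comp_apply, arcT, if_neg hz]
          exact hg'z z

lemma stmt17_aux {n : ℕ} (D : Set (Fin n × Fin n))
    (hsc : ∀ u v : Fin n, u ≠ v → dreach D u v) (t : Fin n) :
    ∀ k : ℕ, ∀ f : Fin n → Fin n, f ∈ genSg D →
      (Finset.univ.filter (fun v => f v ≠ t)).card ≤ k →
      (fun _ => t) ∈ genSg D := by
  intro k
  induction k with
  | zero =>
      intro f hf hcard
      have h0 : (Finset.univ.filter (fun v => f v ≠ t)) = ∅ :=
        Finset.card_eq_zero.mp (Nat.le_zero.mp hcard)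
      have hall : ∀ v, f v = t := by
        intro v
        by_contra hv
        have : v ∈ Finset.univ.filter (fun v => f v ≠ t) := by
          simp [hv]
        rw [h0] at this; exact absurd this (Finset.notMem_empty v)
      have : f = fun _ => t := funext hall
      rwa [← this]
  | succ k ih =>
      intro f hf hcard
      by_cases hall : ∀ v, f v = t
      · have : f = fun _ => t := funext hall
        rwa [← this]
      · push_neg at hall
        obtain ⟨v, hv⟩ := hall
        obtain ⟨g, hg, hgx, hgz⟩ := walk_collapse (hsc (f v) t hv)
        have hgS : g ∈ genSg D := by
          rcases hg with rfl | hg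
          · exact absurd hgx hv
          · exact hg
        have hgf : g ∘ f ∈ genSg D := genSg_mul hf hgS
        refine ih (g ∘ f) hgf ?_
        have hss : (Finset.univ.filter (fun w => (g ∘ f) w ≠ t)) ⊂
            (Finset.univ.filter (fun w => f w ≠ t)) := by
          constructor
          · intro w hw
            simp only [Finset.mem_filter, Finset.mem_univ, true_and,
              Function.comp_apply] at hw ⊢
            intro hfw
            rcases hgz (f w) with h | h
            · exact hw (h.trans hfw)
            · exact hw h
          · intro hsub
            have hvmem : v ∈ Finset.univ.filter (fun w => f w ≠ t) := by simp [hv]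
            have := hsub hvmem
            simp only [Finset.mem_filter, Finset.mem_univ, true_and,
              Function.comp_apply] at this
            exact this hgx
        have := Finset.card_lt_card hss
        omega
      
/-- If `D` is strongly connected with at least two vertices, then
`⟨D⟩` contains every constant transformation. -/
theorem stmt17 (n : ℕ) (hn : 2 ≤ n) (D : Set (Fin n × Fin n))
    (hloop : ∀ u : Fin n, (u, u) ∉ D)
    (hsc : ∀ u v : Fin n, u ≠ v → dreach D u v) :
    ∀ t : Fin n, (fun _ => t) ∈ genSg D := by
  intro t
  -- produce some element of the semigroup
  set u : Fin n := ⟨0, by omega⟩ with hu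
  set w : Fin n := ⟨1, by omega⟩ with hw
  have h01 : u ≠ w := by
    intro h; exact absurd (congrArg Fin.val h) (by simp [hu, hw])
  obtain ⟨c, hc, -⟩ := (Relation.ReflTransGen.cases_head (hsc u w h01)).resolve_left h01
  have hf : arcT u c ∈ genSg D := arcT_mem hc
  exact stmt17_aux D hsc t n (arcT u c) hf
    (le_trans (Finset.card_filter_le _ _) (by simp))
end

section
/- Let D be a connected digraph with at least one arc. Then: (i) ⟨D⟩ has a left zero if and only if every terminal component of D is trivial; moreover, in that case α∈⟨D⟩ is a left zero if and only if vα belongs to a terminal component for every vertex v. (ii) ⟨D⟩ has a right zero if and only if D has exactly one terminal component; moreover, in that case α∈⟨D⟩ is a right zero if and only if α is a constant map. (iii) ⟨D⟩ has a zero if and only if D has exactly one terminal component and that component is trivial; in that case the zero is the constant map onto the single vertex of that terminal component. -/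
/-- `C` is a terminal (strong) component of `D`: a strong component with no arc
leaving it. -/
def IsTerminal {n : ℕ} (D : Set (Fin n × Fin n)) (C : Set (Fin n)) : Prop :=
  (∃ v, C = strongComp D v) ∧ ∀ u ∈ C, ∀ w, (u, w) ∈ D → w ∈ C

/-- `a` is a left zero of `S`. -/
def IsLeftZero {n : ℕ} (S : Set (Fin n → Fin n)) (a : Fin n → Fin n) : Prop :=
  ∀ b ∈ S, sgMul a b = a

/-- `a` is a right zero of `S`. -/
def IsRightZero {n : ℕ} (S : Set (Fin n → Fin n)) (a : Fin n → Fin n) : Prop :=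
  ∀ b ∈ S, sgMul b a = a

section St18Aux

variable {n : ℕ} {D : Set (Fin n × Fin n)}

/-- A sink: a vertex with no out-arc. -/
def st18Sink (D : Set (Fin n × Fin n)) (u : Fin n) : Prop := ∀ w, (u, w) ∉ D

lemma st18_arc_mem {a b : Fin n} (h : (a, b) ∈ D) : arcT a b ∈ genSg D := by
  refine ⟨[(a, b)], by simp, by simp [h], ?_⟩
  simp [List.foldl]

lemma st18_step {α : Fin n → Fin n} (hα : α ∈ genSg D) {a b : Fin n} (h : (a, b) ∈ D) :
    arcT a b ∘ α ∈ genSg D := by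
  obtain ⟨l, hl0, hl1, rfl⟩ := hα
  refine ⟨l ++ [(a, b)], by simp, ?_, ?_⟩
  · intro p hp
    rcases List.mem_append.1 hp with h' | h'
    · exact hl1 p h'
    · simp at h'; subst h'; exact h
  · simp [List.foldl_append]

lemma st18_fix {x : Fin n} (hx : st18Sink D x) {α : Fin n → Fin n} (hα : α ∈ genSg D) :
    α x = x := by
  obtain ⟨l, -, hl1, rfl⟩ := hα
  suffices h : ∀ (l : List (Fin n × Fin n)), (∀ p ∈ l, p ∈ D) → ∀ g : Fin n → Fin n,
      g x = x → l.foldl (fun f p => arcT p.1 p.2 ∘ f) g x = x by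
    exact h l hl1 id rfl
  intro l
  induction l with
  | nil => intro _ g hg; exact hg
  | cons p l ih =>
    intro hl g hg
    refine ih (fun q hq => hl q (List.mem_cons_of_mem _ hq)) _ ?_
    show arcT p.1 p.2 (g x) = x
    rw [hg]
    unfold arcT
    rw [if_neg]
    intro h
    exact hx p.2 (by rw [h]; exact hl p List.mem_cons_self)

lemma st18_dreach {α : Fin n → Fin n} (hα : α ∈ genSg D) (v : Fin n) :
    dreach D v (α v) := by
  obtain ⟨l, -, hl1, rfl⟩ := hα
  suffices h : ∀ (l : List (Fin n × Fin n)), (∀ p ∈ l, p ∈ D) → ∀ g : Fin n → Fin n,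
      dreach D v (g v) → dreach D v (l.foldl (fun f p => arcT p.1 p.2 ∘ f) g v) by
    exact h l hl1 id Relation.ReflTransGen.refl
  intro l
  induction l with
  | nil => intro _ g hg; exact hg
  | cons p l ih =>
    intro hl g hg
    refine ih (fun q hq => hl q (List.mem_cons_of_mem _ hq)) _ ?_
    show dreach D v (arcT p.1 p.2 (g v))
    unfold arcT
    by_cases h : g v = p.1
    · rw [if_pos h]
      exact Relation.ReflTransGen.tail (h ▸ hg) (hl p List.mem_cons_self)
    · rwa [if_neg h]

lemma st18_terminal_closed {C : Set (Fin n)} (hC : IsTerminal D C) {u z : Fin n}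
    (hu : u ∈ C) (h : dreach D u z) : z ∈ C := by
  induction h with
  | refl => exact hu
  | tail h1 h2 ih => exact hC.2 _ ih _ h2

lemma st18_mem_strongComp_self (v : Fin n) : v ∈ strongComp D v :=
  ⟨Relation.ReflTransGen.refl, Relation.ReflTransGen.refl⟩

lemma st18_strongComp_eq {u v : Fin n} (h : u ∈ strongComp D v) :
    strongComp D u = strongComp D v := by
  obtain ⟨h1, h2⟩ := h
  ext w
  exact ⟨fun ⟨a, b⟩ => ⟨a.trans h1, h2.trans b⟩, fun ⟨a, b⟩ => ⟨a.trans h2, h1.trans b⟩⟩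

lemma st18_dreach_sink {x z : Fin n} (hx : st18Sink D x) (h : dreach D x z) : z = x := by
  induction h with
  | refl => rfl
  | tail h1 h2 ih =>
    rw [ih] at h2
    exact (hx _ h2).elim

lemma st18_sink_strongComp {x : Fin n} (hx : st18Sink D x) : strongComp D x = {x} := by
  ext w
  constructor
  · rintro ⟨-, h2⟩
    exact st18_dreach_sink hx h2
  · intro h
    rw [Set.mem_singleton_iff] at h
    subst h
    exact st18_mem_strongComp_self w

lemma st18_sink_terminal {x : Fin n} (hx : st18Sink D x) : IsTerminal D {x} := by
  refine ⟨⟨x, (st18_sink_strongComp hx).symm⟩, ?_⟩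
  intro u hu w hw
  rw [Set.mem_singleton_iff] at hu
  subst hu
  exact (hx w hw).elim

lemma st18_trivial_terminal_sink (hloop : ∀ u : Fin n, (u, u) ∉ D) {x : Fin n}
    (hx : IsTerminal D {x}) : st18Sink D x := by
  intro w hw
  have h := hx.2 x rfl w hw
  rw [Set.mem_singleton_iff] at h
  subst h
  exact hloop _ hw

lemma st18_exists_terminal (v : Fin n) :
    ∃ x, dreach D v x ∧ IsTerminal D (strongComp D x) := by
  classical
  have key : ∀ N (v : Fin n), (Finset.univ.filter (fun w => dreach D v w)).card ≤ N →
      ∃ x, dreach D v x ∧ IsTerminal D (strongComp D x) := by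
    intro N
    induction N with
    | zero =>
      intro v hv
      have h1 : v ∈ Finset.univ.filter (fun w => dreach D v w) :=
        Finset.mem_filter.2 ⟨Finset.mem_univ _, Relation.ReflTransGen.refl⟩
      have := Finset.card_pos.2 ⟨v, h1⟩
      omega
    | succ N ih =>
      intro v hv
      by_cases hterm : IsTerminal D (strongComp D v)
      · exact ⟨v, Relation.ReflTransGen.refl, hterm⟩
      · have h2 : ¬ ∀ u ∈ strongComp D v, ∀ w, (u, w) ∈ D → w ∈ strongComp D v :=
          fun h => hterm ⟨⟨v, rfl⟩, h⟩
        push_neg at h2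
        obtain ⟨u, hu, w, hw, hwn⟩ := h2
        have hvw : dreach D v w := Relation.ReflTransGen.tail hu.2 hw
        have hsub : Finset.univ.filter (fun z => dreach D w z) ⊆
            Finset.univ.filter (fun z => dreach D v z) := by
          intro z hz
          simp only [Finset.mem_filter, Finset.mem_univ, true_and] at hz ⊢
          exact hvw.trans hz
        have hvnot : v ∉ Finset.univ.filter (fun z => dreach D w z) := by
          simp only [Finset.mem_filter, Finset.mem_univ, true_and]
          intro hwv
          exact hwn ⟨hwv, hvw⟩
        have hvin : v ∈ Finset.univ.filter (fun z => dreach D v z) :=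
          Finset.mem_filter.2 ⟨Finset.mem_univ _, Relation.ReflTransGen.refl⟩
        have hlt : (Finset.univ.filter (fun z => dreach D w z)).card <
            (Finset.univ.filter (fun z => dreach D v z)).card :=
          Finset.card_lt_card (Finset.ssubset_iff_of_subset hsub |>.2 ⟨v, hvin, hvnot⟩)
        obtain ⟨x, hx1, hx2⟩ := ih w (by omega)
        exact ⟨x, hvw.trans hx1, hx2⟩
  exact key _ v le_rfl

/-- `k`-step reachability into the target set `T`. -/
def st18ReachK (D : Set (Fin n × Fin n)) (T : Set (Fin n)) : ℕ → Fin n → Prop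
  | 0, u => u ∈ T
  | k + 1, u => u ∈ T ∨ ∃ w, (u, w) ∈ D ∧ st18ReachK D T k w

lemma st18_reachK_of_dreach {T : Set (Fin n)} {u x : Fin n} (h : dreach D u x)
    (hx : x ∈ T) : ∃ k, st18ReachK D T k u := by
  induction h using Relation.ReflTransGen.head_induction_on with
  | refl => exact ⟨0, hx⟩
  | head h1 h2 ih =>
    obtain ⟨k, hk⟩ := ih
    exact ⟨k + 1, Or.inr ⟨_, h1, hk⟩⟩

lemma st18_collapse (hne : D.Nonempty) (T : Set (Fin n))
    (hT : ∀ u, ∃ x ∈ T, dreach D u x) : ∃ α ∈ genSg D, ∀ v, α v ∈ T := by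
  classical
  have hex : ∀ u, ∃ k, st18ReachK D T k u := by
    intro u
    obtain ⟨x, hx, hr⟩ := hT u
    exact st18_reachK_of_dreach hr hx
  have hd0 : ∀ u, Nat.find (hex u) = 0 → u ∈ T := by
    intro u h
    have hspec := Nat.find_spec (hex u)
    rw [h] at hspec
    exact hspec
  have hstep : ∀ u, u ∉ T → ∃ w, (u, w) ∈ D ∧ Nat.find (hex w) < Nat.find (hex u) := by
    intro u hu
    have hspec := Nat.find_spec (hex u)
    have hne0 : Nat.find (hex u) ≠ 0 := fun h => hu (hd0 u h)
    obtain ⟨k, hk⟩ := Nat.exists_eq_succ_of_ne_zero hne0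
    rw [hk] at hspec
    rcases hspec with h | ⟨w, hw, hrw⟩
    · exact absurd h hu
    · exact ⟨w, hw, lt_of_le_of_lt (Nat.find_le hrw) (by omega)⟩
  obtain ⟨⟨a, b⟩, hab⟩ := hne
  have main : ∀ N (α : Fin n → Fin n), α ∈ genSg D →
      (∑ v, Nat.find (hex (α v))) ≤ N → ∃ β ∈ genSg D, ∀ v, β v ∈ T := by
    intro N
    induction N with
    | zero =>
      intro α hα hsum
      refine ⟨α, hα, fun v => hd0 _ ?_⟩
      exact Finset.sum_eq_zero_iff.1 (Nat.le_zero.1 hsum) v (Finset.mem_univ v)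
    | succ N ih =>
      intro α hα hsum
      by_cases hall : ∀ v, α v ∈ T
      · exact ⟨α, hα, hall⟩
      · push_neg at hall
        obtain ⟨v, hv⟩ := hall
        obtain ⟨w, hw, hlt⟩ := hstep (α v) hv
        refine ih (arcT (α v) w ∘ α) (st18_step hα hw) ?_
        have hdec : (∑ u, Nat.find (hex ((arcT (α v) w ∘ α) u))) <
            ∑ u, Nat.find (hex (α u)) := by
          refine Finset.sum_lt_sum ?_ ⟨v, Finset.mem_univ v, ?_⟩
          · intro i _
            show Nat.find (hex (arcT (α v) w (α i))) ≤ Nat.find (hex (α i))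
            unfold arcT
            by_cases h : α i = α v
            · rw [if_pos h, h]
              exact le_of_lt hlt
            · rw [if_neg h]
          · show Nat.find (hex (arcT (α v) w (α v))) < Nat.find (hex (α v))
            unfold arcT
            rw [if_pos rfl]
            exact hlt
        omega
  exact main _ _ (st18_arc_mem hab) le_rfl

lemma st18_leftZero_iff (hloop : ∀ u : Fin n, (u, u) ∉ D) {a : Fin n → Fin n}
    (_ha : a ∈ genSg D) :
    IsLeftZero (genSg D) a ↔ ∀ v, st18Sink D (a v) := by
  constructor
  · intro h v w hw
    have h2 := congrFun (h (arcT (a v) w) (st18_arc_mem hw)) v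
    simp [sgMul, arcT] at h2
    rw [h2] at hw
    exact hloop _ hw
  · intro h b hb
    funext v
    exact st18_fix (h v) hb

lemma st18_rightZero_const (hconn : (underlying D).Connected) {a : Fin n → Fin n}
    (h : IsRightZero (genSg D) a) : ∀ u v, a u = a v := by
  have harc : ∀ p q : Fin n, (p, q) ∈ D → a p = a q := by
    intro p q hpq
    have h2 := congrFun (h (arcT p q) (st18_arc_mem hpq)) p
    simp [sgMul, arcT] at h2
    exact h2.symm
  suffices h2 : ∀ u v : Fin n, (underlying D).Reachable u v → a u = a v by
    intro u v
    exact h2 u v (hconn.preconnected u v)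
  intro u v hr
  obtain ⟨wlk⟩ := hr
  induction wlk with
  | nil => rfl
  | cons hadj p ih =>
    rcases hadj with ⟨-, h1 | h1⟩
    · exact (harc _ _ h1).trans ih
    · exact (harc _ _ h1).symm.trans ih

lemma st18_const_rightZero {t : Fin n} : IsRightZero (genSg D) (fun _ => t) :=
  fun _ _ => rfl

lemma st18_terminal_of_const {t : Fin n} (ht : (fun _ => t) ∈ genSg D) {C : Set (Fin n)}
    (hC : IsTerminal D C) : t ∈ C ∧ C = strongComp D t := by
  obtain ⟨v, rfl⟩ := hC.1
  have h1 : dreach D v t := st18_dreach ht v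
  have h2 : t ∈ strongComp D v :=
    st18_terminal_closed hC (st18_mem_strongComp_self v) h1
  exact ⟨h2, (st18_strongComp_eq h2).symm⟩

end St18Aux

/-- Left, right and two-sided zeros of `⟨D⟩` for a connected digraph:
(i) `⟨D⟩` has a left zero iff all terminal components are trivial, and then the left
zeros are the elements mapping every vertex into a terminal component;
(ii) `⟨D⟩` has a right zero iff `D` has exactly one terminal component, and then the
right zeros are the constant maps;
(iii) `⟨D⟩` has a zero iff `D` has exactly one terminal component and it is trivial,
and then the zero is the constant map onto its vertex. -/
theorem stmt18 (n : ℕ) (D : Set (Fin n × Fin n)) (hloop : ∀ u : Fin n, (u, u) ∉ D)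
    (hne : D.Nonempty) (hconn : (underlying D).Connected) :
    ((∃ a ∈ genSg D, IsLeftZero (genSg D) a) ↔
        ∀ C, IsTerminal D C → ∃ x, C = {x}) ∧
    ((∀ C, IsTerminal D C → ∃ x, C = {x}) →
        ∀ a ∈ genSg D, (IsLeftZero (genSg D) a ↔
          ∀ v, ∃ C, IsTerminal D C ∧ a v ∈ C)) ∧
    ((∃ a ∈ genSg D, IsRightZero (genSg D) a) ↔ (∃! C, IsTerminal D C)) ∧
    ((∃! C, IsTerminal D C) →
        ∀ a ∈ genSg D, (IsRightZero (genSg D) a ↔ ∃ t, a = fun _ => t)) ∧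
    ((∃ a ∈ genSg D, IsLeftZero (genSg D) a ∧ IsRightZero (genSg D) a) ↔
        ∃ x, IsTerminal D {x} ∧ ∀ C, IsTerminal D C → C = {x}) ∧
    (∀ x : Fin n, IsTerminal D {x} → (∀ C, IsTerminal D C → C = {x}) →
        ∀ a ∈ genSg D,
          ((IsLeftZero (genSg D) a ∧ IsRightZero (genSg D) a) ↔ a = fun _ => x)) := by
  -- reachability to sinks when all terminal components are trivial
  have hsinkreach : (∀ C, IsTerminal D C → ∃ x, C = {x}) →
      ∀ u, ∃ x ∈ {y | st18Sink D y}, dreach D u x := by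
    intro htriv u
    obtain ⟨x, hux, hterm⟩ := st18_exists_terminal (D := D) u
    obtain ⟨y, hy⟩ := htriv _ hterm
    have hxy : x = y := by
      have := st18_mem_strongComp_self (D := D) x
      rw [hy, Set.mem_singleton_iff] at this
      exact this
    subst hxy
    rw [hy] at hterm
    exact ⟨x, st18_trivial_terminal_sink hloop hterm, hux⟩
  -- a left zero exists iff all terminal components are trivial
  have part1 : (∃ a ∈ genSg D, IsLeftZero (genSg D) a) ↔
      ∀ C, IsTerminal D C → ∃ x, C = {x} := by
    constructor
    · rintro ⟨a, ha, hz⟩ C hC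
      obtain ⟨w, rfl⟩ := hC.1
      have hsinks := (st18_leftZero_iff hloop ha).1 hz
      have haw : a w ∈ strongComp D w :=
        st18_terminal_closed hC (st18_mem_strongComp_self w) (st18_dreach ha w)
      have hww : w = a w := st18_dreach_sink (hsinks w) haw.1
      have hws : st18Sink D w := by rw [hww]; exact hsinks w
      exact ⟨w, st18_sink_strongComp hws⟩
    · intro htriv
      obtain ⟨α, hα, hαT⟩ := st18_collapse hne _ (hsinkreach htriv)
      exact ⟨α, hα, (st18_leftZero_iff hloop hα).2 hαT⟩
  -- reachability to the base point of the unique terminal component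
  have huniqreach : ∀ t : Fin n, (∀ C, IsTerminal D C → C = strongComp D t) →
      ∀ u, ∃ x ∈ ({t} : Set (Fin n)), dreach D u x := by
    intro t huniq u
    obtain ⟨x, hux, hterm⟩ := st18_exists_terminal (D := D) u
    have hx : strongComp D x = strongComp D t := huniq _ hterm
    have hxt : dreach D x t := by
      have : t ∈ strongComp D x := by
        rw [hx]; exact st18_mem_strongComp_self t
      exact this.2
    exact ⟨t, rfl, hux.trans hxt⟩
  refine ⟨part1, ?_, ?_, ?_, ?_, ?_⟩
  · -- characterization of left zeros
    intro htriv a ha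
    rw [st18_leftZero_iff hloop ha]
    constructor
    · intro h v
      exact ⟨{a v}, st18_sink_terminal (h v), rfl⟩
    · intro h v
      obtain ⟨C, hC, hmem⟩ := h v
      obtain ⟨x, rfl⟩ := htriv C hC
      rw [Set.mem_singleton_iff] at hmem
      rw [hmem]
      exact st18_trivial_terminal_sink hloop hC
  · -- right zero exists iff unique terminal component
    constructor
    · rintro ⟨a, ha, hz⟩
      obtain ⟨⟨p, q⟩, hpq⟩ := hne
      have hconst : a = fun _ => a p :=
        funext fun v => st18_rightZero_const hconn hz v p
      have ht : (fun _ => a p) ∈ genSg D := hconst ▸ ha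
      obtain ⟨x, -, hterm⟩ := st18_exists_terminal (D := D) p
      refine ⟨strongComp D x, hterm, ?_⟩
      intro C hC
      rw [(st18_terminal_of_const ht hC).2, (st18_terminal_of_const ht hterm).2]
    · rintro ⟨C, hC, huniq⟩
      obtain ⟨v, rfl⟩ := hC.1
      obtain ⟨α, hα, hαT⟩ := st18_collapse hne _ (huniqreach v huniq)
      have hconst : α = fun _ => v := funext fun u => hαT u
      exact ⟨α, hα, hconst ▸ st18_const_rightZero⟩
  · -- characterization of right zeros
    intro _ a _
    constructor
    · intro hz
      obtain ⟨⟨p, q⟩, hpq⟩ := hne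
      exact ⟨a p, funext fun v => st18_rightZero_const hconn hz v p⟩
    · rintro ⟨t, rfl⟩
      exact st18_const_rightZero
  · -- zero exists iff unique trivial terminal component
    constructor
    · rintro ⟨a, ha, hL, hR⟩
      obtain ⟨⟨p, q⟩, hpq⟩ := hne
      have hconst : a = fun _ => a p :=
        funext fun v => st18_rightZero_const hconn hR v p
      have ht : (fun _ => a p) ∈ genSg D := hconst ▸ ha
      have hsink : st18Sink D (a p) := (st18_leftZero_iff hloop ha).1 hL p
      refine ⟨a p, st18_sink_terminal hsink, ?_⟩
      intro C hC
      rw [(st18_terminal_of_const ht hC).2, st18_sink_strongComp hsink]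
    · rintro ⟨x, hxterm, huniq⟩
      have hsink : st18Sink D x := st18_trivial_terminal_sink hloop hxterm
      have huniq' : ∀ C, IsTerminal D C → C = strongComp D x := by
        intro C hC
        rw [huniq C hC, st18_sink_strongComp hsink]
      obtain ⟨α, hα, hαT⟩ := st18_collapse hne _ (huniqreach x huniq')
      have hconst : α = fun _ => x := funext fun u => hαT u
      refine ⟨α, hα, ?_, hconst ▸ st18_const_rightZero⟩
      refine (st18_leftZero_iff hloop hα).2 ?_
      intro v
      have : α v = x := hαT v
      rw [this]
      exact hsink
  · -- the zero is the constant map onto the unique trivial terminal component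
    intro x hxterm huniq a ha
    constructor
    · rintro ⟨hL, hR⟩
      obtain ⟨⟨p, q⟩, hpq⟩ := hne
      have hconst : a = fun _ => a p :=
        funext fun v => st18_rightZero_const hconn hR v p
      have hsink : st18Sink D (a p) := (st18_leftZero_iff hloop ha).1 hL p
      have h1 : ({a p} : Set (Fin n)) = {x} := by
        refine huniq _ (st18_sink_terminal hsink)
      have h2 : a p = x := by
        rw [Set.singleton_eq_singleton_iff] at h1
        exact h1
      rw [hconst, h2]
    · rintro rfl
      have hsink : st18Sink D x := st18_trivial_terminal_sink hloop hxterm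
      refine ⟨(st18_leftZero_iff hloop ha).2 fun _ => hsink, st18_const_rightZero⟩
end
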